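/- arXiv:1409.1136 — 8 statements merged into one kernel-verified Lean document; each statement's English description precedes it below -/
import Mathlib

section
/- For every weak class memory automaton there exists a class counting automaton recognizing the same data language. -/
/-- A class memory automaton over alphabet `S` and data set `D`, with state set `Q`. -/
structure CMA (Q S D : Type) where
  init : Q
  δ : Q → S → Option Q → Set Q
  FL : Set Q
  FG : Set Q
  sub : FG ⊆ FL

namespace CMA

variable {Q S D : Type} [DecidableEq D]

/-- One transition step: on input `(a,d)`, from `(q,f)` move to `(q', f[d ↦ q'])`
whenever `q' ∈ δ(q, a, f d)`. -/
def Step (A : CMA Q S D) (c : Q × (D → Option Q)) (x : S × D) (c' : Q × (D → Option Q)) : Prop :=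
  c'.1 ∈ A.δ c.1 x.1 (c.2 x.2) ∧ c'.2 = Function.update c.2 x.2 (some c'.1)

/-- A run on a data word, from a configuration to a configuration. -/
inductive Run (A : CMA Q S D) : (Q × (D → Option Q)) → List (S × D) → (Q × (D → Option Q)) → Prop
  | nil (c) : Run A c [] c
  | cons {c x c' w c''} : A.Step c x c' → Run A c' w c'' → Run A c (x :: w) c''

def initConfig (A : CMA Q S D) : Q × (D → Option Q) := (A.init, fun _ => none)

/-- Acceptance: some run from the initial configuration ends in a globally accepting
state with every remembered data value in a locally accepting state. -/
def Accepts (A : CMA Q S D) (w : List (S × D)) : Prop :=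
  ∃ q f, A.Run A.initConfig w (q, f) ∧ q ∈ A.FG ∧ ∀ d s, f d = some s → s ∈ A.FL

def Lang (A : CMA Q S D) : Set (List (S × D)) := {w | A.Accepts w}

/-- A CMA is weak if every state is locally accepting. -/
def Weak (A : CMA Q S D) : Prop := A.FL = Set.univ

/-- A CMA is deterministic if every value of the transition map is a singleton. -/
def Deterministic (A : CMA Q S D) : Prop := ∀ q a s, ∃ q', A.δ q a s = {q'}

end CMA

/-- Comparison operators used in constraints of class counting automata. -/
inductive CmpOp | eq | ne | lt | gt

/-- Satisfaction of a constraint `(op, e)` by a counter value `n`. -/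
def CmpOp.sat : CmpOp → ℕ → ℕ → Prop
  | .eq, n, e => n = e
  | .ne, n, e => n ≠ e
  | .lt, n, e => n < e
  | .gt, n, e => n > e

/-- Bag operations: increment (`↑⁺`) or reset (`↓`). -/
inductive BagOp | incr | reset

def BagOp.apply : BagOp → ℕ → ℕ → ℕ
  | .incr, old, m => old + m
  | .reset, _, m => m

/-- A class counting automaton with state set `Q` over alphabet `S`:
a finite transition relation `Δ ⊆ Q × Σ × C × {↑⁺,↓} × ℕ × Q`, initial state, final states. -/
structure CCA (Q S : Type) where
  Δ : Set (Q × S × (CmpOp × ℕ) × BagOp × ℕ × Q)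
  fin : Δ.Finite
  init : Q
  F : Set Q

namespace CCA

variable {Q S D : Type} [DecidableEq D]

/-- One step of a CCA on input `(a,d)`: a transition `(q,a,c,π,m,q')` applies if the
bag value of `d` satisfies `c`, and the bag is updated at `d` according to `π` and `m`. -/
def Step (B : CCA Q S) (c : Q × (D → ℕ)) (x : S × D) (c' : Q × (D → ℕ)) : Prop :=
  ∃ cmp e π m, (c.1, x.1, (cmp, e), π, m, c'.1) ∈ B.Δ ∧ cmp.sat (c.2 x.2) e ∧
    c'.2 = Function.update c.2 x.2 (π.apply (c.2 x.2) m)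

inductive Run (B : CCA Q S) : (Q × (D → ℕ)) → List (S × D) → (Q × (D → ℕ)) → Prop
  | nil (c) : Run B c [] c
  | cons {c x c' w c''} : B.Step c x c' → Run B c' w c'' → Run B c (x :: w) c''

/-- Acceptance is by final state, starting from the empty bag. -/
def Accepts (B : CCA Q S) (w : List (S × D)) : Prop :=
  ∃ q h, B.Run ((B.init, fun _ => 0) : Q × (D → ℕ)) w (q, h) ∧ q ∈ B.F

def Lang (B : CCA Q S) (D : Type) [DecidableEq D] : Set (List (S × D)) := {w | B.Accepts w}

/-- A CCA is deterministic if for each state, letter and counter value there is exactly one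
applicable transition (the constraints from each `(q,a)` partition `ℕ`). -/
def Deterministic (B : CCA Q S) : Prop :=
  ∀ q a n, ∃! t : (CmpOp × ℕ) × BagOp × ℕ × Q, (q, a, t) ∈ B.Δ ∧ t.1.1.sat n t.1.2

end CCA

/-- Encode `Option (Fin n)` into counter values: `⊥ ↦ 0`, `i ↦ i+1`. -/
def encO {n : ℕ} : Option (Fin n) → ℕ := fun o => o.elim 0 (fun i => (i : ℕ) + 1)

lemma encO_inj {n : ℕ} : Function.Injective (encO (n := n)) := by
  intro a b h
  cases a <;> cases b <;> simp [encO] at h <;> simp [h]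
  · exact Fin.ext h

/-- For every weak class memory automaton there exists a class counting
automaton recognizing the same data language. -/
theorem wcma_to_cca (S D : Type) [DecidableEq D] [Finite S] [Infinite D]
    (n : ℕ) (A : CMA (Fin n) S D) (hA : A.Weak) :
    ∃ (k : ℕ) (B : CCA (Fin k) S), B.Lang D = A.Lang := by
  -- Reuse simCCA with the same δ; D plays no role in the automaton data itself.
  classical
  let B : CCA (Fin n) S :=
      { Δ := (fun t : Fin n × S × Option (Fin n) × Fin n =>
          (t.1, t.2.1, (CmpOp.eq, encO t.2.2.1), BagOp.reset, encO (some t.2.2.2), t.2.2.2)) ''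
          {t | t.2.2.2 ∈ A.δ t.1 t.2.1 t.2.2.1}
        fin := Set.Finite.image _ (Set.toFinite _)
        init := A.init
        F := A.FG }
  refine ⟨n, B, ?_⟩
  -- forward simulation
  have fwd : ∀ (w : List (S × D)) (c c' : Fin n × (D → Option (Fin n))),
      A.Run c w c' → B.Run (c.1, encO ∘ c.2) w (c'.1, encO ∘ c'.2) := by
    intro w c c' h
    induction h with
    | nil c => exact CCA.Run.nil _
    | cons hs _ ih =>
      rename_i c x cm w c'' _
      refine CCA.Run.cons ?_ ih
      obtain ⟨hδ, hupd⟩ := hs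
      refine ⟨CmpOp.eq, encO (c.2 x.2), BagOp.reset, encO (some cm.1), ?_, rfl, ?_⟩
      · exact ⟨(c.1, x.1, c.2 x.2, cm.1), hδ, rfl⟩
      · show encO ∘ cm.2 = _
        rw [hupd]
        ext d
        by_cases hd : d = x.2 <;>
          simp [Function.comp, Function.update, hd, BagOp.apply]
  -- backward simulation
  have bwd : ∀ (w : List (S × D)) (q : Fin n) (f : D → Option (Fin n))
      (c' : Fin n × (D → ℕ)), B.Run (q, encO ∘ f) w c' →
      ∃ f', c'.2 = encO ∘ f' ∧ A.Run (q, f) w (c'.1, f') := by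
    intro w
    induction w with
    | nil =>
      intro q f c' h
      cases h
      exact ⟨f, rfl, CMA.Run.nil _⟩
    | cons x w ih =>
      intro q f c' h
      cases h with
      | cons hs hr =>
        rename_i cm
        obtain ⟨cmp, e, π, m, hmem, hsat, hupd⟩ := hs
        obtain ⟨t, ht, heq⟩ := hmem
        -- decompose equality of tuples
        obtain ⟨t1, t2, t3, t4⟩ := t
        simp only [Prod.mk.injEq] at heq
        obtain ⟨h1, h2, ⟨hc, he⟩, h4, h5, h7⟩ := heq
        subst h1 h2 hc he h4 h5 h7
        -- the constraint forces f x.2 = t3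
        have hfd : f x.2 = t3 := encO_inj hsat
        have hstep : A.Step (t1, f) x (cm.1, Function.update f x.2 (some cm.1)) := by
          exact ⟨by simpa [hfd] using ht, rfl⟩
        have hbag : cm.2 = encO ∘ Function.update f x.2 (some cm.1) := by
          rw [hupd]
          ext d
          by_cases hd : d = x.2 <;>
            simp [Function.comp, Function.update, hd, BagOp.apply]
        have hr' : B.Run (cm.1, encO ∘ Function.update f x.2 (some cm.1)) w c' := by
          have : cm = (cm.1, encO ∘ Function.update f x.2 (some cm.1)) := by
            cases cm; simp_all
          rwa [this] at hr
        obtain ⟨f', hf', hrun⟩ := ih cm.1 (Function.update f x.2 (some cm.1)) c' hr'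
        exact ⟨f', hf', CMA.Run.cons hstep hrun⟩
  ext w
  constructor
  · rintro ⟨q, h, hrun, hq⟩
    have h0 : (fun _ : D => 0) = encO ∘ (fun _ : D => (none : Option (Fin n))) := rfl
    have : B.init = A.init := rfl
    rw [this, h0] at hrun
    obtain ⟨f', hf', hrun'⟩ := bwd w A.init _ (q, h) hrun
    refine ⟨q, f', hrun', hq, ?_⟩
    intro d s _
    rw [hA]; trivial
  · rintro ⟨q, f, hrun, hq, _⟩
    have := fwd w A.initConfig (q, f) hrun
    exact ⟨q, encO ∘ f, this, hq⟩
end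

section
/- For every class counting automaton there exists a weak class memory automaton recognizing the same data language; moreover, if the class counting automaton is deterministic then the resulting weak class memory automaton can be chosen deterministic. -/
/-! ### Auxiliary development for `cca_to_wcma` -/

section Transfer

variable {Q Q' S D : Type} [DecidableEq D]

/-- Transport a CMA along an equivalence of state types. -/
def CMA.transfer (φ : Q ≃ Q') (A : CMA Q S D) : CMA Q' S D where
  init := φ A.init
  δ q a s := φ '' A.δ (φ.symm q) a (s.map φ.symm)
  FL := φ.symm ⁻¹' A.FL
  FG := φ.symm ⁻¹' A.FG
  sub := fun _ hq => A.sub hq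

/-- The induced map on configurations. -/
def cmaCmap (φ : Q ≃ Q') (c : Q × (D → Option Q)) : Q' × (D → Option Q') :=
  (φ c.1, fun d => (c.2 d).map φ)

lemma cmaCmap_symm_cmap (φ : Q ≃ Q') (c : Q × (D → Option Q)) :
    cmaCmap φ.symm (cmaCmap φ c) = c := by
  cases c with
  | mk q f =>
    simp only [cmaCmap, Prod.mk.injEq, Equiv.symm_apply_apply]
    refine ⟨trivial, funext fun d => ?_⟩
    cases f d <;> simp

lemma CMA.step_transfer (φ : Q ≃ Q') (A : CMA Q S D) (c c' : Q × (D → Option Q)) (x : S × D) :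
    A.Step c x c' ↔ (A.transfer φ).Step (cmaCmap φ c) x (cmaCmap φ c') := by
  constructor
  · rintro ⟨h1, h2⟩
    constructor
    · show φ c'.1 ∈ φ '' A.δ (φ.symm (φ c.1)) x.1 (((c.2 x.2).map φ).map φ.symm)
      have : ((c.2 x.2).map φ).map φ.symm = c.2 x.2 := by cases c.2 x.2 <;> simp
      rw [this, Equiv.symm_apply_apply]
      exact ⟨c'.1, h1, rfl⟩
    · show (fun d => (c'.2 d).map φ) = Function.update (fun d => (c.2 d).map φ) x.2 (some (φ c'.1))
      funext d
      by_cases hd : d = x.2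
      · subst hd; rw [h2]; simp [Function.update]
      · rw [h2]; simp [Function.update, hd]
  · rintro ⟨h1, h2⟩
    have hmap : ((c.2 x.2).map φ).map φ.symm = c.2 x.2 := by cases c.2 x.2 <;> simp
    constructor
    · have h1' : φ c'.1 ∈ φ '' A.δ (φ.symm (φ c.1)) x.1 (((c.2 x.2).map φ).map φ.symm) := h1
      rw [hmap, Equiv.symm_apply_apply] at h1'
      obtain ⟨y, hy, hyy⟩ := h1'
      have : y = c'.1 := φ.injective hyy
      rwa [this] at hy
    · funext d
      apply Option.map_injective φ.injective
      have h2' : Option.map φ (c'.2 d)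
          = Function.update (fun d => (c.2 d).map φ) x.2 (some (φ c'.1)) d := congrFun h2 d
      rw [h2']
      by_cases hd : d = x.2
      · rw [hd]; simp
      · simp [Function.update, hd]

lemma CMA.run_transfer (φ : Q ≃ Q') (A : CMA Q S D) {c c' : Q × (D → Option Q)}
    {w : List (S × D)} (h : A.Run c w c') :
    (A.transfer φ).Run (cmaCmap φ c) w (cmaCmap φ c') := by
  induction h with
  | nil => exact .nil _
  | cons hs _ ih => exact .cons ((A.step_transfer φ _ _ _).mp hs) ih

lemma CMA.run_transfer_back (φ : Q ≃ Q') (A : CMA Q S D) {b b' : Q' × (D → Option Q')}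
    {w : List (S × D)} (h : (A.transfer φ).Run b w b') :
    A.Run (cmaCmap φ.symm b) w (cmaCmap φ.symm b') := by
  induction h with
  | nil => exact .nil _
  | @cons c x c' w' c'' hs _ ih =>
    refine .cons ?_ ih
    have : (A.transfer φ).Step (cmaCmap φ (cmaCmap φ.symm c)) x (cmaCmap φ (cmaCmap φ.symm c')) := by
      have e1 : cmaCmap φ (cmaCmap φ.symm c) = c := by
        have := cmaCmap_symm_cmap (D := D) φ.symm c
        simpa using this
      have e2 : cmaCmap φ (cmaCmap φ.symm c') = c' := by
        have := cmaCmap_symm_cmap (D := D) φ.symm c'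
        simpa using this
      rw [e1, e2]; exact hs
    exact (A.step_transfer φ _ _ _).mpr this

lemma CMA.lang_transfer (φ : Q ≃ Q') (A : CMA Q S D) : (A.transfer φ).Lang = A.Lang := by
  ext w
  simp only [CMA.Lang, Set.mem_setOf_eq, CMA.Accepts]
  constructor
  · rintro ⟨q, f, hrun, hFG, hFL⟩
    have hinit : cmaCmap φ.symm ((A.transfer φ).initConfig) = A.initConfig := by
      simp [cmaCmap, CMA.initConfig, CMA.transfer]
    have := A.run_transfer_back φ hrun
    rw [hinit] at this
    refine ⟨φ.symm q, fun d => (f d).map φ.symm, this, hFG, ?_⟩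
    intro d s hds
    have hds' : Option.map φ.symm (f d) = some s := hds
    cases hc : f d with
    | none => rw [hc] at hds'; simp at hds'
    | some y =>
      rw [hc] at hds'
      simp only [Option.map_some] at hds'
      have : s = φ.symm y := by injection hds'.symm
      subst this
      exact hFL d y hc
  · rintro ⟨q, f, hrun, hFG, hFL⟩
    have := A.run_transfer φ hrun
    have hinit : cmaCmap φ (A.initConfig) = (A.transfer φ).initConfig := by
      simp [cmaCmap, CMA.initConfig, CMA.transfer]
    rw [hinit] at this
    refine ⟨φ q, fun d => (f d).map φ, this, ?_, ?_⟩
    · show φ.symm (φ q) ∈ A.FG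
      rw [Equiv.symm_apply_apply]; exact hFG
    · intro d s hds
      have hds' : Option.map φ (f d) = some s := hds
      cases hc : f d with
      | none => rw [hc] at hds'; simp at hds'
      | some y =>
        rw [hc] at hds'
        simp only [Option.map_some] at hds'
        have : s = φ y := by injection hds'.symm
        subst this
        show φ.symm (φ y) ∈ A.FL
        rw [Equiv.symm_apply_apply]
        exact hFL d y hc

lemma CMA.weak_transfer (φ : Q ≃ Q') (A : CMA Q S D) (h : A.Weak) : (A.transfer φ).Weak := by
  simp only [CMA.Weak, CMA.transfer] at h ⊢
  rw [h]; ext q; simp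

lemma CMA.det_transfer (φ : Q ≃ Q') (A : CMA Q S D) (h : A.Deterministic) :
    (A.transfer φ).Deterministic := by
  intro q a s
  obtain ⟨q', hq'⟩ := h (φ.symm q) a (s.map φ.symm)
  exact ⟨φ q', by simp [CMA.transfer, hq']⟩

end Transfer

section Construction

lemma cmp_sat_min (cmp : CmpOp) (x e N : ℕ) (he : e < N) :
    cmp.sat (min x N) e ↔ cmp.sat x e := by
  cases cmp <;> simp [CmpOp.sat] <;> omega

lemma bag_apply_min (π : BagOp) (x m N : ℕ) :
    min (π.apply (min x N) m) N = min (π.apply x m) N := by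
  cases π <;> simp [BagOp.apply] <;> omega

variable {S : Type} {n : ℕ}

/-- Decode the abstract counter value stored in a CMA memory cell. -/
def decodeOpt {N : ℕ} (s : Option (Fin n × Fin (N+1))) : ℕ :=
  match s with
  | none => 0
  | some q => q.2.val

/-- The weak CMA simulating a CCA, with counters capped at `N`. -/
def ccaCMA (B : CCA (Fin n) S) (N : ℕ) (D : Type) [DecidableEq D] :
    CMA (Fin n × Fin (N+1)) S D where
  init := (B.init, ⟨0, Nat.succ_pos N⟩)
  δ q a s := { q' | ∃ cmp e π m, (q.1, a, (cmp, e), π, m, q'.1) ∈ B.Δ ∧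
      cmp.sat (decodeOpt s) e ∧ (q'.2 : ℕ) = min (π.apply (decodeOpt s) m) N }
  FL := Set.univ
  FG := { q | q.1 ∈ B.F }
  sub := fun _ _ => trivial

/-- Simulation invariant between CCA configurations and CMA configurations. -/
def InvR {D : Type} (N : ℕ) (c : Fin n × (D → ℕ))
    (c' : (Fin n × Fin (N+1)) × (D → Option (Fin n × Fin (N+1)))) : Prop :=
  c'.1.1 = c.1 ∧ ∀ d, decodeOpt (c'.2 d) = min (c.2 d) N

variable {D : Type} [DecidableEq D]

lemma ccaCMA_run_fwd (B : CCA (Fin n) S) (N : ℕ)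
    (hE : ∀ t ∈ B.Δ, t.2.2.1.2 < N)
    {c c1 : Fin n × (D → ℕ)} {w : List (S × D)} (hr : B.Run c w c1) :
    ∀ b, InvR N c b → ∃ b1, (ccaCMA B N D).Run b w b1 ∧ InvR N c1 b1 := by
  induction hr with
  | nil => exact fun b hb => ⟨b, .nil _, hb⟩
  | @cons cc x cc' w' cc'' hs _ ih =>
    intro b hb
    obtain ⟨cmp, e, π, m, hmem, hsat, hupd⟩ := hs
    have he : e < N := hE _ hmem
    set v : ℕ := min (π.apply (decodeOpt (b.2 x.2)) m) N with hv
    have hvN : v < N + 1 := by omega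
    set q2 : Fin n × Fin (N+1) := (cc'.1, ⟨v, hvN⟩) with hq2
    set b' : (Fin n × Fin (N+1)) × (D → Option (Fin n × Fin (N+1))) :=
      (q2, Function.update b.2 x.2 (some q2)) with hb'
    have hsat' : cmp.sat (decodeOpt (b.2 x.2)) e := by
      rw [hb.2 x.2, cmp_sat_min _ _ _ _ he]
      exact hsat
    have hstep : (ccaCMA B N D).Step b x b' := by
      refine ⟨⟨cmp, e, π, m, ?_, hsat', rfl⟩, rfl⟩
      rw [hb.1]; exact hmem
    have hinv' : InvR N cc' b' := by
      refine ⟨rfl, fun d => ?_⟩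
      by_cases hd : d = x.2
      · have h2 : cc'.2 x.2 = π.apply (cc.2 x.2) m := by rw [hupd]; simp
        show decodeOpt (Function.update b.2 x.2 (some q2) d) = min (cc'.2 d) N
        rw [hd, Function.update_self, h2]
        show v = min (π.apply (cc.2 x.2) m) N
        rw [hv, hb.2 x.2, bag_apply_min]
      · have h2 : cc'.2 d = cc.2 d := by rw [hupd]; simp [Function.update, hd]
        show decodeOpt (Function.update b.2 x.2 (some q2) d) = min (cc'.2 d) N
        rw [Function.update_of_ne hd, h2]
        exact hb.2 d
    obtain ⟨b1, hrun, hinv1⟩ := ih b' hinv'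
    exact ⟨b1, .cons hstep hrun, hinv1⟩

lemma ccaCMA_run_bwd (B : CCA (Fin n) S) (N : ℕ)
    (hE : ∀ t ∈ B.Δ, t.2.2.1.2 < N)
    {b b1 : (Fin n × Fin (N+1)) × (D → Option (Fin n × Fin (N+1)))}
    {w : List (S × D)} (hr : (ccaCMA B N D).Run b w b1) :
    ∀ c : Fin n × (D → ℕ), InvR N c b → ∃ c1, B.Run c w c1 ∧ InvR N c1 b1 := by
  induction hr with
  | nil => exact fun c hc => ⟨c, .nil _, hc⟩
  | @cons bb x bb' w' bb'' hs _ ih =>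
    intro c hc
    obtain ⟨⟨cmp, e, π, m, hmem, hsat, hval⟩, hupd⟩ := hs
    have he : e < N := hE _ hmem
    set c' : Fin n × (D → ℕ) := (bb'.1.1, Function.update c.2 x.2 (π.apply (c.2 x.2) m)) with hc'
    have hsat' : cmp.sat (c.2 x.2) e := by
      rw [← cmp_sat_min _ _ _ _ he, ← hc.2 x.2]
      exact hsat
    have hstep : B.Step c x c' := by
      refine ⟨cmp, e, π, m, ?_, hsat', rfl⟩
      rw [← hc.1]; exact hmem
    have hinv' : InvR N c' bb' := by
      refine ⟨rfl, fun d => ?_⟩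
      by_cases hd : d = x.2
      · show decodeOpt (bb'.2 d) = min (Function.update c.2 x.2 (π.apply (c.2 x.2) m) d) N
        rw [hd, hupd, Function.update_self, Function.update_self]
        show (bb'.1.2 : ℕ) = min (π.apply (c.2 x.2) m) N
        rw [hval, hc.2 x.2, bag_apply_min]
      · show decodeOpt (bb'.2 d) = min (Function.update c.2 x.2 (π.apply (c.2 x.2) m) d) N
        rw [hupd, Function.update_of_ne hd, Function.update_of_ne hd]
        exact hc.2 d
    obtain ⟨c1, hrun, hinv1⟩ := ih c' hinv'
    exact ⟨c1, .cons hstep hrun, hinv1⟩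

lemma ccaCMA_lang (B : CCA (Fin n) S) (N : ℕ) (hE : ∀ t ∈ B.Δ, t.2.2.1.2 < N) :
    (ccaCMA B N D).Lang = B.Lang D := by
  ext w
  simp only [CMA.Lang, CCA.Lang, Set.mem_setOf_eq, CMA.Accepts, CCA.Accepts]
  have hinv0 : InvR (D := D) N (B.init, fun _ => 0) ((ccaCMA B N D).initConfig) := by
    exact ⟨rfl, fun d => by simp [decodeOpt, CMA.initConfig]⟩
  constructor
  · rintro ⟨q, f, hrun, hFG, -⟩
    obtain ⟨⟨p, h⟩, hrun', hinv'⟩ := ccaCMA_run_bwd B N hE hrun _ hinv0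
    refine ⟨p, h, hrun', ?_⟩
    have h1 : q.1 = p := hinv'.1
    rw [← h1]; exact hFG
  · rintro ⟨p, h, hrun, hF⟩
    obtain ⟨⟨q, f⟩, hrun', hinv'⟩ := ccaCMA_run_fwd B N hE hrun _ hinv0
    refine ⟨q, f, hrun', ?_, fun _ _ _ => trivial⟩
    show q.1 ∈ B.F
    have h1 : q.1 = p := hinv'.1
    rw [h1]; exact hF

lemma ccaCMA_det (B : CCA (Fin n) S) (N : ℕ) (hd : B.Deterministic) :
    (ccaCMA B N D).Deterministic := by
  intro q a s
  obtain ⟨t, ⟨ht, hts⟩, huniq⟩ := hd q.1 a (decodeOpt s)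
  obtain ⟨⟨cmp, e⟩, π, m, p2⟩ := t
  refine ⟨(p2, ⟨min (π.apply (decodeOpt s) m) N, by omega⟩), ?_⟩
  ext q'
  simp only [ccaCMA, Set.mem_setOf_eq, Set.mem_singleton_iff]
  constructor
  · rintro ⟨cmp', e', π', m', hmem, hsat, hval⟩
    have heq := huniq ((cmp', e'), π', m', q'.1) ⟨hmem, hsat⟩
    simp only [Prod.mk.injEq] at heq
    obtain ⟨⟨h1, h2⟩, h3, h4, h5⟩ := heq
    cases q' with
    | mk q1 q2 =>
      simp only at h5 hval
      subst h1 h2 h3 h4 h5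
      refine Prod.ext rfl (Fin.ext ?_)
      exact hval
  · intro h
    subst h
    exact ⟨cmp, e, π, m, ht, hts, rfl⟩

end Construction

/-- For every class counting automaton there exists a weak class memory
automaton recognizing the same data language; moreover, if the class counting automaton
is deterministic then the resulting weak CMA can be chosen deterministic. -/
theorem cca_to_wcma (S D : Type) [DecidableEq D] [Finite S] [Infinite D]
    (n : ℕ) (B : CCA (Fin n) S) :
    ∃ (k : ℕ) (A : CMA (Fin k) S D), A.Weak ∧ A.Lang = B.Lang D ∧
      (B.Deterministic → A.Deterministic) := by
  classical
  set N : ℕ := (B.fin.toFinset.sup fun t => t.2.2.1.2) + 1 with hN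
  have hE : ∀ t ∈ B.Δ, t.2.2.1.2 < N := by
    intro t ht
    have hmem : t ∈ B.fin.toFinset := B.fin.mem_toFinset.mpr ht
    have hle : t.2.2.1.2 ≤ B.fin.toFinset.sup fun t => t.2.2.1.2 :=
      Finset.le_sup (f := fun t => t.2.2.1.2) hmem
    omega
  refine ⟨n * (N + 1), (ccaCMA B N D).transfer finProdFinEquiv, ?_, ?_, ?_⟩
  · exact CMA.weak_transfer _ _ rfl
  · rw [CMA.lang_transfer, ccaCMA_lang B N hE]
  · intro hd
    exact CMA.det_transfer _ _ (ccaCMA_det B N hd)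
end

section
/- The class of data languages recognized by weak class memory automata is closed under intersection. -/
namespace CMAInter

variable {S D : Type} [DecidableEq D] {n m : ℕ}

/-- The product automaton. -/
def prodCMA (A₁ : CMA (Fin n) S D) (A₂ : CMA (Fin m) S D) : CMA (Fin (n * m)) S D where
  init := finProdFinEquiv (A₁.init, A₂.init)
  δ q a s := {q' |
    (finProdFinEquiv.symm q').1 ∈ A₁.δ (finProdFinEquiv.symm q).1 a
      (s.map (fun p => (finProdFinEquiv.symm p).1)) ∧
    (finProdFinEquiv.symm q').2 ∈ A₂.δ (finProdFinEquiv.symm q).2 a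
      (s.map (fun p => (finProdFinEquiv.symm p).2))}
  FL := Set.univ
  FG := {q | (finProdFinEquiv.symm q).1 ∈ A₁.FG ∧ (finProdFinEquiv.symm q).2 ∈ A₂.FG}
  sub := Set.subset_univ _

def p1 (f : D → Option (Fin (n * m))) : D → Option (Fin n) :=
  fun d => (f d).map (fun p => (finProdFinEquiv.symm p).1)

def p2 (f : D → Option (Fin (n * m))) : D → Option (Fin m) :=
  fun d => (f d).map (fun p => (finProdFinEquiv.symm p).2)

def comb (f₁ : D → Option (Fin n)) (f₂ : D → Option (Fin m)) : D → Option (Fin (n * m)) :=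
  fun d => (f₁ d).bind fun a => (f₂ d).map fun b => finProdFinEquiv (a, b)

lemma run_proj (A₁ : CMA (Fin n) S D) (A₂ : CMA (Fin m) S D) {c w c'}
    (h : (prodCMA A₁ A₂).Run c w c') :
    A₁.Run ((finProdFinEquiv.symm c.1).1, p1 c.2) w ((finProdFinEquiv.symm c'.1).1, p1 c'.2) ∧
    A₂.Run ((finProdFinEquiv.symm c.1).2, p2 c.2) w ((finProdFinEquiv.symm c'.1).2, p2 c'.2) := by
  induction h with
  | nil c => exact ⟨CMA.Run.nil _, CMA.Run.nil _⟩
  | @cons c x c' w c'' hs _ ih =>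
    obtain ⟨hmem, hupd⟩ := hs
    obtain ⟨hm1, hm2⟩ := hmem
    have hp1 : p1 c'.2 = Function.update (p1 c.2) x.2 (some (finProdFinEquiv.symm c'.1).1) := by
      funext d
      by_cases hd : d = x.2
      · subst hd; simp [p1, hupd, Function.update_self]
      · simp [p1, hupd, Function.update_of_ne hd]
    have hp2 : p2 c'.2 = Function.update (p2 c.2) x.2 (some (finProdFinEquiv.symm c'.1).2) := by
      funext d
      by_cases hd : d = x.2
      · subst hd; simp [p2, hupd, Function.update_self]
      · simp [p2, hupd, Function.update_of_ne hd]
    exact ⟨CMA.Run.cons (c' := ((finProdFinEquiv.symm c'.1).1, p1 c'.2)) ⟨hm1, hp1⟩ ih.1,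
           CMA.Run.cons (c' := ((finProdFinEquiv.symm c'.1).2, p2 c'.2)) ⟨hm2, hp2⟩ ih.2⟩

lemma run_comb (A₁ : CMA (Fin n) S D) (A₂ : CMA (Fin m) S D) {w : List (S × D)}
    {c₁ c₁' : Fin n × (D → Option (Fin n))} {c₂ c₂' : Fin m × (D → Option (Fin m))}
    (H₁ : A₁.Run c₁ w c₁') (H₂ : A₂.Run c₂ w c₂')
    (inv : ∀ d, c₁.2 d = none ↔ c₂.2 d = none) :
    (prodCMA A₁ A₂).Run (finProdFinEquiv (c₁.1, c₂.1), comb c₁.2 c₂.2) w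
      (finProdFinEquiv (c₁'.1, c₂'.1), comb c₁'.2 c₂'.2) := by
  induction H₁ generalizing c₂ with
  | nil c =>
    cases H₂
    exact CMA.Run.nil _
  | @cons c x c' w c'' hs _ ih =>
    rcases H₂ with _ | @⟨_, _, d₂, _, _, hs₂, H₂'⟩
    obtain ⟨hm1, hu1⟩ := hs
    obtain ⟨hm2, hu2⟩ := hs₂
    have hmem1 : (comb c.2 c₂.2 x.2).map (fun p => (finProdFinEquiv.symm p).1) = c.2 x.2 := by
      rcases h1 : c.2 x.2 with _ | a
      · simp [comb, h1]
      · rcases h2 : c₂.2 x.2 with _ | b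
        · exact absurd ((inv x.2).mpr h2) (by simp [h1])
        · simp only [comb, h1, h2, Option.bind_some, Option.bind_some, Option.map_some, Equiv.symm_apply_apply]
    have hmem2 : (comb c.2 c₂.2 x.2).map (fun p => (finProdFinEquiv.symm p).2) = c₂.2 x.2 := by
      rcases h2 : c₂.2 x.2 with _ | b
      · simp [comb, h2]
      · rcases h1 : c.2 x.2 with _ | a
        · exact absurd ((inv x.2).mp h1) (by simp [h2])
        · simp only [comb, h1, h2, Option.bind_some, Option.bind_some, Option.map_some, Equiv.symm_apply_apply]
    have hstep : (prodCMA A₁ A₂).Step (finProdFinEquiv (c.1, c₂.1), comb c.2 c₂.2) x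
        (finProdFinEquiv (c'.1, d₂.1), comb c'.2 d₂.2) := by
      constructor
      · refine ⟨?_, ?_⟩
        · simp only [Equiv.symm_apply_apply, hmem1]; exact hm1
        · simp only [Equiv.symm_apply_apply, hmem2]; exact hm2
      · funext d
        by_cases hd : d = x.2
        · subst hd
          simp [comb, hu1, hu2, Function.update_self]
        · simp [comb, hu1, hu2, Function.update_of_ne hd]
    have inv' : ∀ d, c'.2 d = none ↔ d₂.2 d = none := by
      intro d
      by_cases hd : d = x.2
      · subst hd; simp [hu1, hu2, Function.update_self]
      · simp [hu1, hu2, Function.update_of_ne hd, inv d]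
    exact CMA.Run.cons hstep (ih H₂' inv')

end CMAInter

/-- The class of data languages recognized by weak class memory automata
is closed under intersection. -/
theorem wcma_inter (S D : Type) [DecidableEq D] [Finite S] [Infinite D]
    (n m : ℕ) (A₁ : CMA (Fin n) S D) (A₂ : CMA (Fin m) S D)
    (h₁ : A₁.Weak) (h₂ : A₂.Weak) :
    ∃ (k : ℕ) (B : CMA (Fin k) S D), B.Weak ∧ B.Lang = A₁.Lang ∩ A₂.Lang := by
  refine ⟨n * m, CMAInter.prodCMA A₁ A₂, rfl, ?_⟩
  ext w
  constructor
  · rintro ⟨q, f, hrun, hFG, -⟩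
    have hp := CMAInter.run_proj A₁ A₂ hrun
    have hinit1 : (finProdFinEquiv.symm (CMAInter.prodCMA A₁ A₂).initConfig.1).1 = A₁.init := by
      simp [CMA.initConfig, CMAInter.prodCMA]
    have hinit2 : (finProdFinEquiv.symm (CMAInter.prodCMA A₁ A₂).initConfig.1).2 = A₂.init := by
      simp [CMA.initConfig, CMAInter.prodCMA]
    have hf0 : CMAInter.p1 (CMAInter.prodCMA A₁ A₂).initConfig.2 = fun _ => (none : Option (Fin n)) := by
      funext d; simp [CMAInter.p1, CMA.initConfig]
    have hf0' : CMAInter.p2 (CMAInter.prodCMA A₁ A₂).initConfig.2 = fun _ => (none : Option (Fin m)) := by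
      funext d; simp [CMAInter.p2, CMA.initConfig]
    constructor
    · refine ⟨(finProdFinEquiv.symm q).1, CMAInter.p1 f, ?_, hFG.1, ?_⟩
      · have := hp.1
        rw [hinit1, hf0] at this
        exact this
      · intro d s _; rw [h₁]; trivial
    · refine ⟨(finProdFinEquiv.symm q).2, CMAInter.p2 f, ?_, hFG.2, ?_⟩
      · have := hp.2
        rw [hinit2, hf0'] at this
        exact this
      · intro d s _; rw [h₂]; trivial
  · rintro ⟨⟨q₁, f₁, hrun₁, hFG₁, -⟩, ⟨q₂, f₂, hrun₂, hFG₂, -⟩⟩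
    have hcomb := CMAInter.run_comb A₁ A₂ hrun₁ hrun₂ (by intro d; simp [CMA.initConfig])
    have hci : (finProdFinEquiv ((A₁.initConfig).1, (A₂.initConfig).1),
        CMAInter.comb (A₁.initConfig).2 (A₂.initConfig).2) =
        (CMAInter.prodCMA A₁ A₂).initConfig := by
      refine Prod.ext ?_ ?_
      · simp [CMA.initConfig, CMAInter.prodCMA]
      · funext d; simp [CMA.initConfig, CMAInter.comb]
    rw [hci] at hcomb
    refine ⟨finProdFinEquiv (q₁, q₂), CMAInter.comb f₁ f₂, hcomb, ?_, ?_⟩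
    · constructor <;> simp [CMAInter.prodCMA, hFG₁, hFG₂]
    · intro d s _; trivial
end

section
/- Every data language recognized by a non-reset history register automaton of type m is recognized by a weak class memory automaton. -/
/-- A non-reset history register automaton of type `m` with state set `Q` over alphabet `S`. -/
structure NRHRA (Q S : Type) (m : ℕ) where
  δ : Set (Q × S × (Set (Fin m) × Set (Fin m)) × Q)
  init : Q
  F : Set Q

namespace NRHRA

variable {Q S D : Type} {m : ℕ}

/-- One step on input `(a,d)`: there is `X ⊆ [m]` with `(q, a, (H⁻¹(d), X), q') ∈ δ`, and
the new assignment is obtained by removing `d` from every history and adding `d` to the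
histories indexed by `X`. -/
def Step (B : NRHRA Q S m) (c : Q × (Fin m → Set D)) (x : S × D) (c' : Q × (Fin m → Set D)) :
    Prop :=
  ∃ X : Set (Fin m), (c.1, x.1, ({i | x.2 ∈ c.2 i}, X), c'.1) ∈ B.δ ∧
    ∀ i, c'.2 i = {d | (d ∈ c.2 i ∧ d ≠ x.2) ∨ (d = x.2 ∧ i ∈ X)}

inductive Run (B : NRHRA Q S m) :
    (Q × (Fin m → Set D)) → List (S × D) → (Q × (Fin m → Set D)) → Prop
  | nil (c) : Run B c [] c
  | cons {c x c' w c''} : B.Step c x c' → Run B c' w c'' → Run B c (x :: w) c''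

/-- Acceptance is by final state, starting with the initially empty assignment. -/
def Accepts (B : NRHRA Q S m) (w : List (S × D)) : Prop :=
  ∃ q H, B.Run ((B.init, fun _ => (∅ : Set D))) w (q, H) ∧ q ∈ B.F

def Lang (B : NRHRA Q S m) (D : Type) : Set (List (S × D)) := {w | B.Accepts w}

end NRHRA

section Aux

variable {S D : Type} {n m : ℕ}

/-- The CMA state space before relabeling: an nrHRA state together with the set of
registers the last-read datum was put into (coded as a Boolean vector). -/
abbrev nrSt (n m : ℕ) := Fin n × (Fin m → Bool)

/-- Decode an `Option` class-memory value into the set `H⁻¹(d)`. -/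
def decodeH (e : nrSt n m ≃ Fin (Fintype.card (nrSt n m))) :
    Option (Fin (Fintype.card (nrSt n m))) → Set (Fin m)
  | none => ∅
  | some s => {i | (e.symm s).2 i = true}

/-- The weak CMA simulating an nrHRA. -/
def NRHRA.toCMA (B : NRHRA (Fin n) S m) (D : Type)
    (e : nrSt n m ≃ Fin (Fintype.card (nrSt n m))) :
    CMA (Fin (Fintype.card (nrSt n m))) S D where
  init := e (B.init, fun _ => false)
  δ := fun p a o => {p' | ((e.symm p).1, a,
      (decodeH e o, {i | (e.symm p').2 i = true}), (e.symm p').1) ∈ B.δ}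
  FL := Set.univ
  FG := {p | (e.symm p).1 ∈ B.F}
  sub := Set.subset_univ _

end Aux

/-- Every data language recognized by a non-reset history register automaton
of type `m` is recognized by a weak class memory automaton. -/
theorem nrhra_to_wcma (S D : Type) [DecidableEq D] [Finite S] [Infinite D]
    (m n : ℕ) (B : NRHRA (Fin n) S m) :
    ∃ (k : ℕ) (A : CMA (Fin k) S D), A.Weak ∧ A.Lang = B.Lang D := by
  classical
  set e := Fintype.equivFin (nrSt n m) with he
  set A := B.toCMA D e with hA
  refine ⟨_, A, rfl, ?_⟩
  -- the simulation relation
  set Rel : (Fin (Fintype.card (nrSt n m)) × (D → Option _)) →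
      (Fin n × (Fin m → Set D)) → Prop :=
    fun c b => (e.symm c.1).1 = b.1 ∧
      ∀ i d, d ∈ b.2 i ↔ ∃ s, c.2 d = some s ∧ (e.symm s).2 i = true with hRel
  have hdec : ∀ (f : D → Option (Fin (Fintype.card (nrSt n m)))) (b : Fin n × (Fin m → Set D))
      (c1 : Fin (Fintype.card (nrSt n m))) (d : D), Rel (c1, f) b →
      decodeH e (f d) = {i | d ∈ b.2 i} := by
    intro f b c1 d hr
    ext i
    rcases hfd : f d with _ | s
    · simp only [decodeH, Set.mem_empty_iff_false, Set.mem_setOf_eq, false_iff]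
      intro hd
      rcases (hr.2 i d).1 hd with ⟨s, hs, _⟩
      change f d = some s at hs
      rw [hfd] at hs; exact nomatch hs
    · simp only [decodeH, Set.mem_setOf_eq]
      constructor
      · intro hb; exact (hr.2 i d).2 ⟨s, hfd, hb⟩
      · intro hd
        rcases (hr.2 i d).1 hd with ⟨s', hs', hb⟩
        change f d = some s' at hs'
        rw [hfd] at hs'
        cases hs'; exact hb
  -- forward simulation: CMA runs are matched by nrHRA runs
  have fwd : ∀ c w c', A.Run c w c' → ∀ b, Rel c b →
      ∃ b', B.Run b w b' ∧ Rel c' b' := by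
    intro c w c' h
    induction h with
    | nil c => exact fun b hb => ⟨b, .nil b, hb⟩
    | @cons c x c' w c'' hs _ ih =>
      rintro ⟨q, H⟩ hb
      obtain ⟨hδ, hupd⟩ := hs
      set X : Set (Fin m) := {i | (e.symm c'.1).2 i = true} with hX
      refine ?_
      have hstep : B.Step (q, H) x ((e.symm c'.1).1,
          fun i => {d | (d ∈ H i ∧ d ≠ x.2) ∨ (d = x.2 ∧ i ∈ X)}) := by
        refine ⟨X, ?_, fun i => rfl⟩
        have h1 : decodeH e (c.2 x.2) = {i | x.2 ∈ H i} := by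
          rcases c with ⟨c1, f⟩; exact hdec f (q, H) c1 x.2 hb
        have h2 : (e.symm c.1).1 = q := hb.1
        have hδx : ((e.symm c.1).1, x.1,
            (decodeH e (c.2 x.2), {i | (e.symm c'.1).2 i = true}), (e.symm c'.1).1) ∈ B.δ := hδ
        rw [h1, h2] at hδx
        exact hδx
      have hnext : Rel c' ((e.symm c'.1).1,
          fun i => {d | (d ∈ H i ∧ d ≠ x.2) ∨ (d = x.2 ∧ i ∈ X)}) := by
        refine ⟨rfl, ?_⟩
        intro i d
        simp only [Set.mem_setOf_eq, hupd]
        rcases eq_or_ne d x.2 with rfl | hne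
        · simp only [ne_eq, not_true_eq_false, and_false, false_or, true_and,
            Function.update_self]
          constructor
          · intro hi; exact ⟨c'.1, rfl, hi⟩
          · rintro ⟨s, hs, hi⟩; cases hs; exact hi
        · simp [hne, Function.update_of_ne hne]
          exact (hb.2 i d)
      obtain ⟨b', hrun, hrel⟩ := ih _ hnext
      exact ⟨b', .cons hstep hrun, hrel⟩
  -- backward simulation
  have bwd : ∀ b w b', B.Run b w b' → ∀ c, Rel c b →
      ∃ c', A.Run c w c' ∧ Rel c' b' := by
    intro b w b' h
    induction h with
    | nil b => exact fun c hc => ⟨c, .nil c, hc⟩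
    | @cons b x b' w b'' hs _ ih =>
      rintro ⟨c1, f⟩ hc
      obtain ⟨X, hδ, hupd⟩ := hs
      set p' : Fin (Fintype.card (nrSt n m)) := e (b'.1, fun i => decide (i ∈ X)) with hp'
      have hps : e.symm p' = (b'.1, fun i => decide (i ∈ X)) := e.symm_apply_apply _
      have hXeq : {i | (e.symm p').2 i = true} = X := by
        ext i; simp [hps]
      have hstep : A.Step (c1, f) x (p', Function.update f x.2 (some p')) := by
        refine ⟨?_, rfl⟩
        show ((e.symm c1).1, x.1, (decodeH e (f x.2), {i | (e.symm p').2 i = true}),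
          (e.symm p').1) ∈ B.δ
        have h1 : decodeH e (f x.2) = {i | x.2 ∈ b.2 i} := hdec f b c1 x.2 hc
        rw [h1, hXeq, hps, hc.1]
        exact hδ
      have hnext : Rel (p', Function.update f x.2 (some p')) b' := by
        refine ⟨by rw [hps], ?_⟩
        intro i d
        rw [hupd i]
        simp only [Set.mem_setOf_eq]
        rcases eq_or_ne d x.2 with rfl | hne
        · simp only [ne_eq, not_true_eq_false, and_false, false_or, true_and,
            Function.update_self]
          constructor
          · intro hi
            refine ⟨p', rfl, ?_⟩
            simp [hps, hi]
          · rintro ⟨s, hs, hi⟩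
            cases hs
            simpa [hps] using hi
        · simp [hne, Function.update_of_ne hne]
          exact (hc.2 i d)
      obtain ⟨c', hrun, hrel⟩ := ih _ hnext
      exact ⟨c', .cons hstep hrun, hrel⟩
  have hinit : Rel A.initConfig (B.init, fun _ => (∅ : Set D)) := by
    constructor
    · show (e.symm (e (B.init, fun _ => false))).1 = B.init
      rw [e.symm_apply_apply]
    · intro i d
      simp only [Set.mem_empty_iff_false, false_iff, not_exists]
      rintro s ⟨hs, -⟩
      exact nomatch (hs : (none : Option _) = some s)
  ext w
  constructor
  · rintro ⟨q, f, hrun, hqF, _⟩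
    obtain ⟨⟨q', H⟩, hrun', hrel⟩ := fwd _ _ _ hrun _ hinit
    refine ⟨q', H, hrun', ?_⟩
    have : (e.symm q).1 = q' := hrel.1
    rw [← this]
    exact hqF
  · rintro ⟨q, H, hrun, hqF⟩
    obtain ⟨⟨p, f⟩, hrun', hrel⟩ := bwd _ _ _ hrun _ hinit
    refine ⟨p, f, hrun', ?_, fun d s _ => trivial⟩
    show (e.symm p).1 ∈ B.F
    rw [hrel.1]
    exact hqF
end

section
/- Every data language recognized by a weak class memory automaton with state set [m] is recognized by a non-reset history register automaton of type m, where place i stores the data values last seen in state i. -/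
section Aux

variable {S D : Type} [DecidableEq D] {m : ℕ}

def encCMA (f : D → Option (Fin m)) : Fin m → Set D := fun i => {d | f d = some i}

def transB (A : CMA (Fin m) S D) : NRHRA (Fin m) S m where
  δ := {t | ∃ (o : Option (Fin m)),
        t.2.2.1.1 = {i | o = some i} ∧ t.2.2.2 ∈ A.δ t.1 t.2.1 o ∧
        t.2.2.1.2 = {t.2.2.2}}
  init := A.init
  F := A.FG

lemma option_eq_of_set {o o' : Option (Fin m)}
    (h : {i | o = some i} = {i | o' = some i}) : o = o' := by
  have h' : ∀ i, o = some i ↔ o' = some i := fun i => Set.ext_iff.mp h i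
  cases o with
  | none =>
    cases o' with
    | none => rfl
    | some j => exact ((h' j).mpr rfl)
  | some i => exact ((h' i).mp rfl).symm

lemma enc_update (f : D → Option (Fin m)) (d0 : D) (q' : Fin m) (i : Fin m) :
    encCMA (Function.update f d0 (some q')) i
      = {d | (d ∈ encCMA f i ∧ d ≠ d0) ∨ (d = d0 ∧ i ∈ ({q'} : Set (Fin m)))} := by
  ext d
  simp only [encCMA, Set.mem_setOf_eq, Set.mem_singleton_iff]
  by_cases hd : d = d0
  · subst hd; simp [eq_comm]
  · simp [Function.update_of_ne hd, hd]

lemma step_fwd (A : CMA (Fin m) S D) {c c' : Fin m × (D → Option (Fin m))}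
    {x : S × D} (h : A.Step c x c') :
    (transB A).Step (c.1, encCMA c.2) x (c'.1, encCMA c'.2) := by
  obtain ⟨hq, hf⟩ := h
  refine ⟨{c'.1}, ⟨c.2 x.2, rfl, hq, rfl⟩, ?_⟩
  intro i
  show encCMA c'.2 i = _
  rw [hf]
  exact enc_update c.2 x.2 c'.1 i

lemma step_bwd (A : CMA (Fin m) S D) {c c' : Fin m × (Fin m → Set D)}
    {f : D → Option (Fin m)} {x : S × D}
    (h : (transB A).Step c x c') (hc : c.2 = encCMA f) :
    A.Step (c.1, f) x (c'.1, Function.update f x.2 (some c'.1)) ∧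
      c'.2 = encCMA (Function.update f x.2 (some c'.1)) := by
  obtain ⟨X, ⟨o, ho, hq, hX⟩, hH⟩ := h
  have ho' : f x.2 = o := by
    apply option_eq_of_set
    rw [← ho, hc]
    rfl
  have hX' : X = {c'.1} := hX
  constructor
  · refine ⟨?_, rfl⟩
    show c'.1 ∈ A.δ c.1 x.1 (f x.2)
    rw [ho']
    exact hq
  · funext i
    have h2 : c'.2 i = {d | (d ∈ c.2 i ∧ d ≠ x.2) ∨ (d = x.2 ∧ i ∈ X)} := hH i
    rw [h2, enc_update f x.2 c'.1 i, hX', hc]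

lemma run_fwd (A : CMA (Fin m) S D) {c c' : Fin m × (D → Option (Fin m))}
    {w : List (S × D)} (h : A.Run c w c') :
    (transB A).Run (c.1, encCMA c.2) w (c'.1, encCMA c'.2) := by
  induction h with
  | nil c => exact NRHRA.Run.nil _
  | cons hs _ ih => exact NRHRA.Run.cons (step_fwd A hs) ih

lemma run_bwd (A : CMA (Fin m) S D) {c c' : Fin m × (Fin m → Set D)}
    {w : List (S × D)} (h : (transB A).Run c w c') :
    ∀ f : D → Option (Fin m), c.2 = encCMA f →
    ∃ f', c'.2 = encCMA f' ∧ A.Run (c.1, f) w (c'.1, f') := by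
  induction h with
  | nil c =>
    intro f hf
    exact ⟨f, hf, CMA.Run.nil _⟩
  | cons hs _ ih =>
    intro f hf
    obtain ⟨hstep, hH1⟩ := step_bwd A hs hf
    obtain ⟨f', hf', hrun⟩ := ih _ hH1
    exact ⟨f', hf', CMA.Run.cons hstep hrun⟩

end Aux

/-- Every data language recognized by a weak class memory automaton with
state set `[m]` is recognized by a non-reset history register automaton of type `m`
(place `i` storing the data values last seen in state `i`). -/
theorem wcma_to_nrhra (S D : Type) [DecidableEq D] [Finite S] [Infinite D]
    (m : ℕ) (A : CMA (Fin m) S D) (hA : A.Weak) :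
    ∃ (k : ℕ) (B : NRHRA (Fin k) S m), B.Lang D = A.Lang := by
  refine ⟨m, transB A, ?_⟩
  ext w
  simp only [NRHRA.Lang, CMA.Lang, Set.mem_setOf_eq, NRHRA.Accepts, CMA.Accepts]
  have hinit : (fun _ => (∅ : Set D)) = encCMA (fun _ : D => (none : Option (Fin m))) := by
    funext i; ext d; simp [encCMA]
  constructor
  · rintro ⟨q, H, hr, hF⟩
    obtain ⟨f', hf', hrun⟩ := run_bwd A hr (fun _ => none) hinit
    refine ⟨q, f', hrun, hF, ?_⟩
    intro d s _
    rw [hA]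
    trivial
  · rintro ⟨q, f, hr, hF, -⟩
    refine ⟨q, encCMA f, ?_, hF⟩
    have := run_fwd A hr
    rwa [hinit]
end

section
/- For any finite label set Q and any bound k, the set of finite unordered Q-labelled rooted trees of depth at most k, quasi-ordered by existence of a root- and label-preserving tree homomorphism, is a well-quasi-order. -/
/-- Finite rooted trees with nodes labelled by `Q`.  The children are given as a list,
but the homomorphism quasi-order below does not depend on the order of children, so these
represent finite unordered labelled rooted trees. -/
inductive LTree (Q : Type) : Type
  | node : Q → List (LTree Q) → LTree Q

namespace LTree

variable {Q : Type}

/-- `Hom T₁ T₂` holds iff there is a tree homomorphism from `T₁` to `T₂`, i.e. a map of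
nodes sending the root to the root and preserving parents and labels.  (Equivalently:
root labels agree and every child subtree of `T₁` maps homomorphically into some child
subtree of `T₂`.) -/
def Hom : LTree Q → LTree Q → Prop
  | .node a cs, .node b ds => a = b ∧ ∀ c ∈ cs, ∃ d ∈ ds, Hom c d
decreasing_by
  have := List.sizeOf_lt_of_mem (by assumption : c ∈ cs)
  simp_wf <;> omega

/-- `DepthLE k T`: every node of `T` is at distance at most `k − 1` from the root
(a single node has depth 1). -/
def DepthLE : ℕ → LTree Q → Prop
  | k, .node _ cs => 1 ≤ k ∧ ∀ c ∈ cs, DepthLE (k - 1) c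
decreasing_by
  have := List.sizeOf_lt_of_mem (by assumption : c ∈ cs)
  simp_wf <;> omega

end LTree


namespace LTree

variable {Q : Type}

theorem hom_node_iff {a b : Q} {cs ds : List (LTree Q)} :
    Hom (node a cs) (node b ds) ↔ a = b ∧ ∀ c ∈ cs, ∃ d ∈ ds, Hom c d := by
  rw [Hom]

theorem depthLE_node_iff {k : ℕ} {a : Q} {cs : List (LTree Q)} :
    DepthLE k (node a cs) ↔ 1 ≤ k ∧ ∀ c ∈ cs, DepthLE (k - 1) c := by
  rw [DepthLE]

theorem ind {motive : LTree Q → Prop}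
    (h : ∀ a cs, (∀ c ∈ cs, motive c) → motive (node a cs)) : ∀ t, motive t
  | node a cs => h a cs (fun c hc => ind h c)
decreasing_by
  have := List.sizeOf_lt_of_mem hc
  simp_wf <;> omega

theorem hom_refl : ∀ t : LTree Q, Hom t t := by
  intro t
  induction t using LTree.ind with
  | h a cs ih =>
    rw [hom_node_iff]
    exact ⟨rfl, fun c hc => ⟨c, hc, ih c hc⟩⟩

theorem hom_trans : ∀ t₁ t₂ t₃ : LTree Q, Hom t₁ t₂ → Hom t₂ t₃ → Hom t₁ t₃ := by
  intro t₁
  induction t₁ using LTree.ind with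
  | h a cs ih =>
    rintro ⟨b, ds⟩ ⟨e, es⟩ h12 h23
    rw [hom_node_iff] at *
    refine ⟨h12.1.trans h23.1, fun c hc => ?_⟩
    obtain ⟨d, hd, hcd⟩ := h12.2 c hc
    obtain ⟨f, hf, hdf⟩ := h23.2 d hd
    exact ⟨f, hf, ih c hc d f hcd hdf⟩

instance : IsRefl (LTree Q) Hom := ⟨hom_refl⟩
instance : IsTrans (LTree Q) Hom := ⟨fun a b c => hom_trans a b c⟩
instance : IsPreorder (LTree Q) Hom where
  refl := hom_refl
  trans := fun a b c => hom_trans a b c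
instance : IsPreorder (List (LTree Q)) (List.SublistForall₂ Hom) where
  refl := refl_of _
  trans := fun _ _ _ => _root_.trans

theorem exists_of_forall₂ {l₁ l' : List (LTree Q)} (hf : List.Forall₂ Hom l₁ l') :
    ∀ c ∈ l₁, ∃ d ∈ l', Hom c d := by
  induction hf with
  | nil => simp
  | cons hr hrest ih =>
    intro c hc
    rcases List.mem_cons.1 hc with rfl | hc'
    · exact ⟨_, List.mem_cons_self, hr⟩
    · obtain ⟨d, hd, hcd⟩ := ih c hc'
      exact ⟨d, List.mem_cons_of_mem _ hd, hcd⟩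

theorem forall_exists_of_sublistForall₂ {l₁ l₂ : List (LTree Q)}
    (h : List.SublistForall₂ Hom l₁ l₂) : ∀ c ∈ l₁, ∃ d ∈ l₂, Hom c d := by
  rw [List.sublistForall₂_iff] at h
  obtain ⟨l', hf, hsub⟩ := h
  intro c hc
  obtain ⟨d, hd, hcd⟩ := exists_of_forall₂ hf c hc
  exact ⟨d, hsub.subset hd, hcd⟩

def lb : LTree Q → Q | node a _ => a
def ch : LTree Q → List (LTree Q) | node _ cs => cs

theorem hom_of_lb_ch {t s : LTree Q} (h1 : lb t = lb s)
    (h2 : List.SublistForall₂ Hom (ch t) (ch s)) : Hom t s := by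
  obtain ⟨a, cs⟩ := t
  obtain ⟨b, ds⟩ := s
  rw [hom_node_iff]
  exact ⟨h1, forall_exists_of_sublistForall₂ h2⟩

theorem pwo (Q : Type) [Finite Q] : ∀ k : ℕ,
    Set.PartiallyWellOrderedOn {T : LTree Q | DepthLE k T} Hom := by
  intro k
  induction k with
  | zero =>
    rw [Set.partiallyWellOrderedOn_iff_exists_lt]
    intro f hf
    exfalso
    have := hf 0
    rw [Set.mem_setOf_eq] at this
    generalize f 0 = t at this
    obtain ⟨a, cs⟩ := t
    rw [depthLE_node_iff] at this
    omega
  | succ k ih =>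
    rw [Set.partiallyWellOrderedOn_iff_exists_lt]
    intro f hf
    have hl := Set.PartiallyWellOrderedOn.partiallyWellOrderedOn_sublistForall₂ Hom ih
    have hmem : ∀ n, ch (f n) ∈ {l : List (LTree Q) | ∀ x ∈ l, x ∈ {T : LTree Q | DepthLE k T}} := by
      intro n
      have := hf n
      rw [Set.mem_setOf_eq] at this
      generalize f n = t at this ⊢
      obtain ⟨a, cs⟩ := t
      rw [depthLE_node_iff] at this
      simpa [ch] using this.2
    obtain ⟨g, hg⟩ := hl.exists_monotone_subseq (f := fun n => ch (f n)) hmem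
    obtain ⟨i, j, hne, hij⟩ := Finite.exists_ne_map_eq_of_infinite (fun n => lb (f (g n)))
    rcases hne.lt_or_gt with h | h
    · exact ⟨g i, g j, g.strictMono h, hom_of_lb_ch hij (hg i j h.le)⟩
    · exact ⟨g j, g i, g.strictMono h, hom_of_lb_ch hij.symm (hg j i h.le)⟩

end LTree

/-- For any finite label set `Q` and any bound `k`, the set of finite
unordered `Q`-labelled rooted trees of depth at most `k`, quasi-ordered by existence of a
root- and label-preserving tree homomorphism, is a well-quasi-order. -/
theorem ltree_hom_wqo (Q : Type) [Finite Q] (k : ℕ) :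
    Reflexive (fun T₁ T₂ : LTree Q => LTree.Hom T₁ T₂) ∧
    Transitive (fun T₁ T₂ : LTree Q => LTree.Hom T₁ T₂) ∧
    ∀ f : ℕ → {T : LTree Q // LTree.DepthLE k T}, ∃ i j, i < j ∧ LTree.Hom (f i).1 (f j).1 := by
  refine ⟨LTree.hom_refl, fun a b c => LTree.hom_trans a b c, fun f => ?_⟩
  obtain ⟨i, j, hij, h⟩ := (Set.partiallyWellOrderedOn_iff_exists_lt.1 (LTree.pwo Q k)) (fun n => (f n).1) (fun n => (f n).2)
  exact ⟨i, j, hij, h⟩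
end

section
/- The class of data languages recognized by weak nested data class memory automata of level l is closed under intersection and union. -/
/-- The canonical nested data set of level `l`: a data value of level `i` (1 ≤ i ≤ l) is a
list of naturals of length `i`; `pred` is given by dropping the last element, so the
ancestors of a data value are its nonempty proper prefixes.  This is a full forest of
infinitely many trees of level `l`. -/
def ND (l : ℕ) : Type := {xs : List ℕ // xs ≠ [] ∧ xs.length ≤ l}

namespace ND

variable {l : ℕ}

instance : DecidableEq (ND l) := Subtype.instDecidableEq

/-- The level of a data value. -/
def level (d : ND l) : ℕ := d.1.length

/-- The ancestor of `d` at level `j+1` (for `j+1 ≤ level d`); `ancestor d (level d - 1) = d`. -/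
def ancestor (d : ND l) (j : ℕ) : ND l :=
  ⟨d.1.take (j + 1), by
    refine ⟨?_, ?_⟩
    · have h1 : 0 < d.1.length := by
        have := d.2.1; cases h : d.1 <;> simp_all
      have : 0 < (d.1.take (j + 1)).length := by
        rw [List.length_take]; exact lt_min (Nat.succ_pos j) h1
      exact List.ne_nil_of_length_pos this
    · rw [List.length_take]; exact le_trans (min_le_right _ _) d.2.2⟩

end ND

/-- A nested data CMA of level `l`, with state set `Q` over alphabet `S`.  The transition
map, on reading a level-`i` data value, consults the class memory of all `i` ancestors of
the value (from the root down, the value itself included), presented as a list of length `i`. -/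
structure NDCMA (l : ℕ) (Q S : Type) where
  init : Q
  δ : Q → S → List (Option Q) → Set Q
  FL : Set Q
  FG : Set Q
  sub : FG ⊆ FL

namespace NDCMA

variable {l : ℕ} {Q S : Type}

/-- The class-memory profile of the ancestors of `d` (root first, `d` last). -/
def profile (f : ND l → Option Q) (d : ND l) : List (Option Q) :=
  (List.range d.1.length).map fun j => f (d.ancestor j)

/-- One step on input `(a,d)` where `d` has level `i`: choose
`q' ∈ δ(q, a, (i, f(pred^{i-1} d), …, f(pred d), f d))` and update the class memory of `d`
and of each of its ancestors to `q'`. -/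
def Step (A : NDCMA l Q S) (c : Q × (ND l → Option Q)) (x : S × ND l)
    (c' : Q × (ND l → Option Q)) : Prop :=
  c'.1 ∈ A.δ c.1 x.1 (profile c.2 x.2) ∧
    (∀ e : ND l, e.1 <+: x.2.1 → c'.2 e = some c'.1) ∧
    (∀ e : ND l, ¬ e.1 <+: x.2.1 → c'.2 e = c.2 e)

inductive Run (A : NDCMA l Q S) :
    (Q × (ND l → Option Q)) → List (S × ND l) → (Q × (ND l → Option Q)) → Prop
  | nil (c) : Run A c [] c
  | cons {c x c' w c''} : A.Step c x c' → Run A c' w c'' → Run A c (x :: w) c''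

def initConfig (A : NDCMA l Q S) : Q × (ND l → Option Q) := (A.init, fun _ => none)

def Accepts (A : NDCMA l Q S) (w : List (S × ND l)) : Prop :=
  ∃ q f, A.Run A.initConfig w (q, f) ∧ q ∈ A.FG ∧ ∀ d s, f d = some s → s ∈ A.FL

def Lang (A : NDCMA l Q S) : Set (List (S × ND l)) := {w | A.Accepts w}

/-- Weakness: every state is locally accepting. -/
def Weak (A : NDCMA l Q S) : Prop := A.FL = Set.univ

/-- Determinism: every value of the transition map is a singleton. -/
def Deterministic (A : NDCMA l Q S) : Prop := ∀ q a p, ∃ q', A.δ q a p = {q'}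

end NDCMA

/- ===================== auxiliary development ===================== -/

namespace NDCMA

variable {l : ℕ} {S Q Q' Q₁ Q₂ : Type}

lemma profile_map (g : Q → Q') (F : ND l → Option Q) (d : ND l) :
    profile (fun x => Option.map g (F x)) d = (profile F d).map (Option.map g) := by
  simp [profile, List.map_map]

lemma profile_bindid (f : ND l → Option Q) (d : ND l) :
    (profile (fun x => Option.map some (f x)) d).map (fun o => o.bind id) = profile f d := by
  unfold profile
  rw [List.map_map]
  congr 1
  funext j
  cases h : f (d.ancestor j) <;> simp [Function.comp, h]

/-- Product automaton. -/
def prodA (A₁ : NDCMA l Q₁ S) (A₂ : NDCMA l Q₂ S) (G : Set (Q₁ × Q₂)) :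
    NDCMA l (Q₁ × Q₂) S where
  init := (A₁.init, A₂.init)
  δ := fun q a p => {r | r.1 ∈ A₁.δ q.1 a (p.map (Option.map Prod.fst)) ∧
                         r.2 ∈ A₂.δ q.2 a (p.map (Option.map Prod.snd))}
  FL := Set.univ
  FG := G
  sub := Set.subset_univ _

lemma prodA_weak (A₁ : NDCMA l Q₁ S) (A₂ : NDCMA l Q₂ S) (G : Set (Q₁ × Q₂)) :
    (prodA A₁ A₂ G).Weak := rfl

lemma prod_run_fst {A₁ : NDCMA l Q₁ S} {A₂ : NDCMA l Q₂ S} {G}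
    {c c' : (Q₁ × Q₂) × (ND l → Option (Q₁ × Q₂))} {w}
    (h : (prodA A₁ A₂ G).Run c w c') :
    A₁.Run (c.1.1, fun d => Option.map Prod.fst (c.2 d)) w
      (c'.1.1, fun d => Option.map Prod.fst (c'.2 d)) := by
  induction h with
  | nil => exact Run.nil _
  | cons hs _ ih =>
    obtain ⟨⟨h1, _⟩, hp, hn⟩ := hs
    refine Run.cons ⟨?_, ?_, ?_⟩ ih
    · rw [← profile_map] at h1; exact h1
    · intro e he; simp [hp e he]
    · intro e he; simp [hn e he]

lemma prod_run_snd {A₁ : NDCMA l Q₁ S} {A₂ : NDCMA l Q₂ S} {G}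
    {c c' : (Q₁ × Q₂) × (ND l → Option (Q₁ × Q₂))} {w}
    (h : (prodA A₁ A₂ G).Run c w c') :
    A₂.Run (c.1.2, fun d => Option.map Prod.snd (c.2 d)) w
      (c'.1.2, fun d => Option.map Prod.snd (c'.2 d)) := by
  induction h with
  | nil => exact Run.nil _
  | cons hs _ ih =>
    obtain ⟨⟨_, h2⟩, hp, hn⟩ := hs
    refine Run.cons ⟨?_, ?_, ?_⟩ ih
    · rw [← profile_map] at h2; exact h2
    · intro e he; simp [hp e he]
    · intro e he; simp [hn e he]

def pairMem (f₁ : ND l → Option Q₁) (f₂ : ND l → Option Q₂) : ND l → Option (Q₁ × Q₂) :=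
  fun d => Option.map₂ Prod.mk (f₁ d) (f₂ d)

lemma pair_fst {f₁ : ND l → Option Q₁} {f₂ : ND l → Option Q₂}
    (hs : ∀ d, f₁ d = none ↔ f₂ d = none) (d : ND l) :
    Option.map Prod.fst (pairMem f₁ f₂ d) = f₁ d := by
  cases h1 : f₁ d with
  | none => simp [pairMem, h1]
  | some a =>
    cases h2 : f₂ d with
    | none => exact absurd ((hs d).mpr h2) (by simp [h1])
    | some b => simp [pairMem, h1, h2, Option.map₂]

lemma pair_snd {f₁ : ND l → Option Q₁} {f₂ : ND l → Option Q₂}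
    (hs : ∀ d, f₁ d = none ↔ f₂ d = none) (d : ND l) :
    Option.map Prod.snd (pairMem f₁ f₂ d) = f₂ d := by
  cases h1 : f₁ d with
  | none => rw [(hs d).mp h1]; simp [pairMem, h1]
  | some a =>
    cases h2 : f₂ d with
    | none => exact absurd ((hs d).mpr h2) (by simp [h1])
    | some b => simp [pairMem, h1, h2, Option.map₂]

lemma prod_run_pair {A₁ : NDCMA l Q₁ S} {A₂ : NDCMA l Q₂ S} {G}
    {q₁ f₁ r₁ g₁ q₂ f₂ r₂ g₂} {w : List (S × ND l)}
    (h1 : A₁.Run (q₁, f₁) w (r₁, g₁)) (h2 : A₂.Run (q₂, f₂) w (r₂, g₂))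
    (hs : ∀ d, f₁ d = none ↔ f₂ d = none) :
    (prodA A₁ A₂ G).Run ((q₁, q₂), pairMem f₁ f₂) w ((r₁, r₂), pairMem g₁ g₂) := by
  induction w generalizing q₁ f₁ q₂ f₂ with
  | nil => cases h1; cases h2; exact Run.nil _
  | cons x w ih =>
    cases h1 with
    | @cons _ _ c₁ _ _ s1 hr1 =>
      cases h2 with
      | @cons _ _ c₂ _ _ s2 hr2 =>
        obtain ⟨p₁, m₁⟩ := c₁
        obtain ⟨p₂, m₂⟩ := c₂
        obtain ⟨d1, dp1, dn1⟩ := s1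
        obtain ⟨d2, dp2, dn2⟩ := s2
        dsimp only at d1 d2 dp1 dp2 dn1 dn2
        have hf1 : (fun d => Option.map Prod.fst (pairMem f₁ f₂ d)) = f₁ :=
          funext (pair_fst hs)
        have hf2 : (fun d => Option.map Prod.snd (pairMem f₁ f₂ d)) = f₂ :=
          funext (pair_snd hs)
        have hs' : ∀ d, m₁ d = none ↔ m₂ d = none := by
          intro d
          by_cases hd : d.1 <+: x.2.1
          · simp [dp1 d hd, dp2 d hd]
          · rw [dn1 d hd, dn2 d hd]; exact hs d
        refine Run.cons ⟨⟨?_, ?_⟩, ?_, ?_⟩ (ih hr1 hr2 hs')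
        · rw [← profile_map, hf1]; exact d1
        · rw [← profile_map, hf2]; exact d2
        · intro e he; simp [pairMem, dp1 e he, dp2 e he, Option.map₂]
        · intro e he; simp [pairMem, dn1 e he, dn2 e he]

/-- Totalization. -/
def totalA (A : NDCMA l Q S) : NDCMA l (Option Q) S where
  init := some A.init
  δ := fun p a prof =>
    match p with
    | none => {none}
    | some q => insert none (some '' A.δ q a (prof.map (fun o => o.bind id)))
  FL := Set.univ
  FG := some '' A.FG
  sub := Set.subset_univ _

lemma total_nonempty (A : NDCMA l Q S) :
    ∀ q a p, (none : Option Q) ∈ (totalA A).δ q a p := by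
  intro q a p
  cases q <;> simp [totalA]

lemma run_exists {A : NDCMA l Q S}
    (hne : ∀ q a p, ∃ r, r ∈ A.δ q a p) (c) (w : List (S × ND l)) :
    ∃ c', A.Run c w c' := by
  classical
  induction w generalizing c with
  | nil => exact ⟨c, Run.nil c⟩
  | cons x w ih =>
    obtain ⟨q', hq'⟩ := hne c.1 x.1 (profile c.2 x.2)
    obtain ⟨c', hc'⟩ := ih (q', fun e => if e.1 <+: x.2.1 then some q' else c.2 e)
    refine ⟨c', Run.cons ⟨hq', ?_, ?_⟩ hc'⟩
    · intro e he; simp [he]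
    · intro e he; simp [he]

lemma total_run_embed {A : NDCMA l Q S} {c c' : Q × (ND l → Option Q)} {w}
    (h : A.Run c w c') :
    (totalA A).Run (some c.1, fun d => Option.map some (c.2 d)) w
      (some c'.1, fun d => Option.map some (c'.2 d)) := by
  induction h with
  | nil => exact Run.nil _
  | cons hs _ ih =>
    obtain ⟨h1, hp, hn⟩ := hs
    refine Run.cons ⟨?_, ?_, ?_⟩ ih
    · show _ ∈ insert none (some '' _)
      rw [profile_bindid]
      exact Set.mem_insert_of_mem _ ⟨_, h1, rfl⟩
    · intro e he; simp [hp e he]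
    · intro e he; simp [hn e he]

lemma total_run_none {A : NDCMA l Q S} {c c' : Option Q × (ND l → Option (Option Q))} {w}
    (h : (totalA A).Run c w c') (hc : c.1 = none) : c'.1 = none := by
  induction h with
  | nil => exact hc
  | @cons c x cm w c'' hs _ ih =>
    apply ih
    have := hs.1
    rw [hc] at this
    simpa [totalA] using this

lemma total_run_project {A : NDCMA l Q S} {q : Q} {f : ND l → Option Q} {w}
    {c' : Option Q × (ND l → Option (Option Q))}
    (h : (totalA A).Run (some q, fun d => Option.map some (f d)) w c') :
    c'.1 = none ∨ ∃ q' f', c' = (some q', fun d => Option.map some (f' d)) ∧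
      A.Run (q, f) w (q', f') := by
  classical
  induction w generalizing q f with
  | nil =>
    cases h
    exact Or.inr ⟨q, f, rfl, Run.nil _⟩
  | cons x w ih =>
    cases h with
    | @cons _ _ cm _ _ hs hr =>
      obtain ⟨p, F⟩ := cm
      obtain ⟨h1, hp, hn⟩ := hs
      dsimp only at hp hn
      rw [show (totalA A).δ (some q, fun d => Option.map some (f d)).1 x.1
            (profile (some q, fun d => Option.map some (f d)).2 x.2)
          = insert none (some '' A.δ q x.1 (profile f x.2)) by
            simp only [totalA]; rw [profile_bindid]] at h1
      rcases h1 with h1 | ⟨r, hr', hrp⟩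
      case _ => exact Or.inl (total_run_none hr (by simpa using h1))
      · dsimp only at hrp
        have hF : F = fun d => Option.map some
            ((fun e => if e.1 <+: x.2.1 then some r else f e) d) := by
          funext e
          by_cases he : e.1 <+: x.2.1
          · rw [hp e he, ← hrp]; simp [he]
          · rw [hn e he]; simp [he]
        rw [hF, ← hrp] at hr
        rcases ih hr with h | ⟨q', f', hc, hrun⟩
        · exact Or.inl h
        · refine Or.inr ⟨q', f', hc, Run.cons ⟨hr', ?_, ?_⟩ hrun⟩
          · intro e he; simp [he]
          · intro e he; simp [he]

/-- Relabeling along an equivalence. -/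
def mapA (e : Q ≃ Q') (A : NDCMA l Q S) : NDCMA l Q' S where
  init := e A.init
  δ := fun q a p => e '' A.δ (e.symm q) a (p.map (Option.map e.symm))
  FL := Set.univ
  FG := e '' A.FG
  sub := Set.subset_univ _

lemma mapA_run (e : Q ≃ Q') (A : NDCMA l Q S) {c c' w} (h : A.Run c w c') :
    (mapA e A).Run (e c.1, fun d => Option.map e (c.2 d)) w
      (e c'.1, fun d => Option.map e (c'.2 d)) := by
  induction h with
  | nil => exact Run.nil _
  | @cons ca xa cb wa cc hs _ ih =>
    obtain ⟨h1, hp, hn⟩ := hs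
    refine Run.cons ⟨?_, ?_, ?_⟩ ih
    · show e cb.1 ∈ e '' A.δ (e.symm (e ca.1)) xa.1
        ((profile (fun d => Option.map e (ca.2 d)) xa.2).map (Option.map e.symm))
      refine ⟨cb.1, ?_, rfl⟩
      simp only [← profile_map, e.symm_apply_apply]
      have hmm : (fun x => Option.map e.symm (Option.map e (ca.2 x))) = ca.2 := by
        funext x; cases ca.2 x <;> simp
      rw [hmm]
      exact h1
    · intro e' he; simp [hp e' he]
    · intro e' he; simp [hn e' he]

lemma mapA_run_back (e : Q ≃ Q') (A : NDCMA l Q S) {c c' w}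
    (h : (mapA e A).Run c w c') :
    A.Run (e.symm c.1, fun d => Option.map e.symm (c.2 d)) w
      (e.symm c'.1, fun d => Option.map e.symm (c'.2 d)) := by
  induction h with
  | nil => exact Run.nil _
  | @cons ca xa cb wa cc hs _ ih =>
    obtain ⟨h1, hp, hn⟩ := hs
    obtain ⟨r, hr, hre⟩ := h1
    refine Run.cons ⟨?_, ?_, ?_⟩ ih
    · show e.symm cb.1 ∈ A.δ (e.symm ca.1) xa.1 (profile (fun d => Option.map e.symm (ca.2 d)) xa.2)
      rw [profile_map]
      rw [← hre, e.symm_apply_apply]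
      exact hr
    · intro e' he; simp [hp e' he]
    · intro e' he; simp [hn e' he]

lemma mapA_weak (e : Q ≃ Q') (A : NDCMA l Q S) : (mapA e A).Weak := rfl

lemma mapA_lang (e : Q ≃ Q') (A : NDCMA l Q S) (hA : A.Weak) :
    (mapA e A).Lang = A.Lang := by
  ext w
  constructor
  · rintro ⟨q, f, hrun, hq, -⟩
    have hmr := mapA_run_back e A hrun
    refine ⟨e.symm q, fun d => Option.map e.symm (f d), ?_, ?_, ?_⟩
    · have heq : A.initConfig = (e.symm (mapA e A).initConfig.1,
          fun d => Option.map e.symm ((mapA e A).initConfig.2 d)) := by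
        simp [initConfig, mapA]
      rw [heq]; exact hmr
    · obtain ⟨r, hr, hre⟩ := hq
      rwa [← hre, e.symm_apply_apply]
    · intro d s _; rw [hA]; trivial
  · rintro ⟨q, f, hrun, hq, -⟩
    have hmr := mapA_run e A hrun
    refine ⟨e q, fun d => Option.map e (f d), ?_, ⟨q, hq, rfl⟩, ?_⟩
    · exact hmr
    · intro d s _; trivial

lemma prod_lang_inter (A₁ : NDCMA l Q₁ S) (A₂ : NDCMA l Q₂ S)
    (h₁ : A₁.Weak) (h₂ : A₂.Weak) :
    (prodA A₁ A₂ (A₁.FG ×ˢ A₂.FG)).Lang = A₁.Lang ∩ A₂.Lang := by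
  ext w
  constructor
  · rintro ⟨q, f, hrun, hq, -⟩
    constructor
    · refine ⟨q.1, fun d => Option.map Prod.fst (f d), prod_run_fst hrun, hq.1, ?_⟩
      intro d s _; rw [h₁]; trivial
    · refine ⟨q.2, fun d => Option.map Prod.snd (f d), prod_run_snd hrun, hq.2, ?_⟩
      intro d s _; rw [h₂]; trivial
  · rintro ⟨⟨q₁, f₁, hr1, hq1, -⟩, ⟨q₂, f₂, hr2, hq2, -⟩⟩
    refine ⟨(q₁, q₂), pairMem f₁ f₂,
      prod_run_pair hr1 hr2 (fun d => by simp [initConfig]), ⟨hq1, hq2⟩, fun d s _ => trivial⟩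

lemma prod_lang_union (A₁ : NDCMA l Q₁ S) (A₂ : NDCMA l Q₂ S)
    (h₁ : A₁.Weak) (h₂ : A₂.Weak) :
    (prodA (totalA A₁) (totalA A₂)
      {p | p.1 ∈ (totalA A₁).FG ∨ p.2 ∈ (totalA A₂).FG}).Lang
      = A₁.Lang ∪ A₂.Lang := by
  ext w
  constructor
  · rintro ⟨q, f, hrun, hq, -⟩
    rcases hq with hq | hq
    · left
      have hpr := total_run_project (q := A₁.init) (f := fun _ => none)
        (prod_run_fst hrun)
      rcases hpr with hnone | ⟨q', f', hc, hrun'⟩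
      · obtain ⟨v, -, hve⟩ := hq
        rw [← hve] at hnone
        simp at hnone
      · obtain ⟨v, hv, hve⟩ := hq
        have hq1 : q.1 = some q' := congrArg Prod.fst hc
        have : v = q' := by
          have := hve.trans hq1
          simpa using this
        refine ⟨q', f', hrun', this ▸ hv, ?_⟩
        intro d s _; rw [h₁]; trivial
    · right
      have hpr := total_run_project (q := A₂.init) (f := fun _ => none)
        (prod_run_snd hrun)
      rcases hpr with hnone | ⟨q', f', hc, hrun'⟩
      · obtain ⟨v, -, hve⟩ := hq
        rw [← hve] at hnone
        simp at hnone
      · obtain ⟨v, hv, hve⟩ := hq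
        have hq1 : q.2 = some q' := congrArg Prod.fst hc
        have : v = q' := by
          have := hve.trans hq1
          simpa using this
        refine ⟨q', f', hrun', this ▸ hv, ?_⟩
        intro d s _; rw [h₂]; trivial
  · rintro (⟨q, f, hrun, hq, -⟩ | ⟨q, f, hrun, hq, -⟩)
    · have he := total_run_embed hrun
      obtain ⟨⟨p₂, F₂⟩, hc₂⟩ := run_exists
        (fun q a p => ⟨none, total_nonempty A₂ q a p⟩)
        ((totalA A₂).initConfig) w
      refine ⟨(some q, p₂), _,
        prod_run_pair he hc₂ (fun d => by simp [initConfig]),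
        Or.inl ⟨q, hq, rfl⟩, fun d s _ => trivial⟩
    · have he := total_run_embed hrun
      obtain ⟨⟨p₁, F₁⟩, hc₁⟩ := run_exists
        (fun q a p => ⟨none, total_nonempty A₁ q a p⟩)
        ((totalA A₁).initConfig) w
      refine ⟨(p₁, some q), _,
        prod_run_pair hc₁ he (fun d => by simp [initConfig]),
        Or.inr ⟨q, hq, rfl⟩, fun d s _ => trivial⟩

end NDCMA

/-- The class of data languages recognized by weak nested data class memory
automata of level `l` is closed under intersection and union. -/
theorem weak_ndcma_inter_union (l : ℕ) (S : Type) [Finite S]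
    (n m : ℕ) (A₁ : NDCMA l (Fin n) S) (A₂ : NDCMA l (Fin m) S)
    (h₁ : A₁.Weak) (h₂ : A₂.Weak) :
    (∃ (k : ℕ) (B : NDCMA l (Fin k) S), B.Weak ∧ B.Lang = A₁.Lang ∩ A₂.Lang) ∧
    (∃ (k : ℕ) (B : NDCMA l (Fin k) S), B.Weak ∧ B.Lang = A₁.Lang ∪ A₂.Lang) := by
  constructor
  · refine ⟨n * m, NDCMA.mapA finProdFinEquiv
      (NDCMA.prodA A₁ A₂ (A₁.FG ×ˢ A₂.FG)), NDCMA.mapA_weak _ _, ?_⟩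
    rw [NDCMA.mapA_lang _ _ (NDCMA.prodA_weak _ _ _), NDCMA.prod_lang_inter A₁ A₂ h₁ h₂]
  · refine ⟨(n + 1) * (m + 1), NDCMA.mapA
      ((Equiv.prodCongr (finSuccEquiv n).symm (finSuccEquiv m).symm).trans finProdFinEquiv)
      (NDCMA.prodA (NDCMA.totalA A₁) (NDCMA.totalA A₂)
        {p | p.1 ∈ (NDCMA.totalA A₁).FG ∨ p.2 ∈ (NDCMA.totalA A₂).FG}),
      NDCMA.mapA_weak _ _, ?_⟩
    rw [NDCMA.mapA_lang _ _ (NDCMA.prodA_weak _ _ _), NDCMA.prod_lang_union A₁ A₂ h₁ h₂]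
end

section
/- In any reachable configuration (q, m₁, …, m_k) of a level-k HOMCA', there is a unique index 0 ≤ i ≤ k such that m_j = ⊥ for all j ≤ i and m_j ≠ ⊥ for all j > i. -/
/-- `MS A j` is the type of level-`j` multisets over `A` (with `MS A 0 = A`):
a level-1 multiset is a finite multiset over `A`, and a level-`(j+1)` multiset is a
finite multiset of level-`j` multisets. -/
def MS (A : Type) : ℕ → Type
  | 0 => A
  | n + 1 => Multiset (MS A n)

/-- The counter part of a configuration of a level-`k` HOMCA: for each `j ∈ [1,k]`,
either `⊥` or a level-`j` multiset (index `j - 1 : Fin k` holds `m_j`). -/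
abbrev Mvec (A : Type) (k : ℕ) := (j : Fin k) → Option (MS A (j.1 + 1))

/-- The counter operations of a level-`k` higher-order multicounter automaton.
`new j`, `store j` and `load j` refer to the counter at index `j` (i.e. `m_{j+1}`). -/
inductive HOp (A : Type) (k : ℕ)
  | new (j : Fin k)
  | inc (a : A)
  | dec (a : A)
  | store (j : Fin k)
  | load (j : Fin k)

/-- The semantics of counter operations, with the additional enabling conditions of
HOMCA': `store_i` is enabled only when `m_1 = … = m_{i-1} = ⊥`, and `new_i` only when
`m_k, …, m_{i+1} ≠ ⊥` and `m_{i-1} = … = m_1 = ⊥` (as always, `load_i` only when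
`m_1, …, m_i` are all `⊥`). -/
inductive OpStep (A : Type) (k : ℕ) : HOp A k → Mvec A k → Mvec A k → Prop
  | new (j : Fin k) (m : Mvec A k) (h : m j = none)
      (hhi : ∀ j' : Fin k, j < j' → m j' ≠ none)
      (hlo : ∀ j' : Fin k, j' < j → m j' = none) :
      OpStep A k (.new j) m (Function.update m j (some ((0 : Multiset (MS A j.1)) : MS A (j.1 + 1))))
  | inc (hk : 0 < k) (a : A) (m : Mvec A k) (m1 : Multiset A)
      (h : m ⟨0, hk⟩ = some m1) :
      OpStep A k (.inc a) m (Function.update m ⟨0, hk⟩ (some (a ::ₘ m1)))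
  | dec (hk : 0 < k) (a : A) (m : Mvec A k) (m1 : Multiset A)
      (h : m ⟨0, hk⟩ = some (a ::ₘ m1)) :
      OpStep A k (.dec a) m (Function.update m ⟨0, hk⟩ (some m1))
  | store (j : Fin k) (hj : j.1 + 1 < k) (m : Mvec A k)
      (v : MS A (j.1 + 1)) (w : Multiset (MS A (j.1 + 1)))
      (hv : m j = some v) (hw : m ⟨j.1 + 1, hj⟩ = some w)
      (hen : ∀ j' : Fin k, j' < j → m j' = none) :
      OpStep A k (.store j)
        m (Function.update (Function.update m ⟨j.1 + 1, hj⟩ (some (v ::ₘ w))) j none)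
  | load (j : Fin k) (hj : j.1 + 1 < k) (m : Mvec A k)
      (v : MS A (j.1 + 1)) (w : Multiset (MS A (j.1 + 1)))
      (hm : m ⟨j.1 + 1, hj⟩ = some (v ::ₘ w))
      (hen : ∀ j' : Fin k, j' ≤ j → m j' = none) :
      OpStep A k (.load j)
        m (Function.update (Function.update m ⟨j.1 + 1, hj⟩ (some w)) j (some v))

/-- A level-`k` HOMCA' with state set `Q`, input alphabet `S` and multiset alphabet `A`. -/
structure HOMCAp (Q S A : Type) (k : ℕ) where
  init : Q
  Δ : Set (Q × S × HOp A k × Q)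
  F : Set Q

/-- One step between configurations of a HOMCA'. -/
def HOMCAp.CStep {Q S A : Type} {k : ℕ} (M : HOMCAp Q S A k)
    (c c' : Q × Mvec A k) : Prop :=
  ∃ a op, (c.1, a, op, c'.1) ∈ M.Δ ∧ OpStep A k op c.2 c'.2


def Shape' {A : Type} {k : ℕ} (m : Mvec A k) : Prop :=
  ∃ i, i ≤ k ∧ (∀ j : Fin k, j.1 + 1 ≤ i → m j = none) ∧
    (∀ j : Fin k, i < j.1 + 1 → m j ≠ none)

lemma shape_step {A : Type} {k : ℕ} {op : HOp A k} {m m' : Mvec A k}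
    (hs : OpStep A k op m m') (h : Shape' m) : Shape' m' := by
  obtain ⟨i, hik, hlo, hhi⟩ := h
  cases hs with
  | new j m h0 hhi' hlo' =>
    refine ⟨j.1, j.2.le, ?_, ?_⟩
    · intro j' hj'
      rw [Function.update_of_ne (by intro e; subst e; omega)]
      exact hlo' j' (by omega)
    · intro j' hj'
      rcases eq_or_ne j' j with rfl | hne
      · simp [Function.update_self]
      · rw [Function.update_of_ne hne]
        refine hhi' j' ?_
        have : j.1 ≠ j'.1 := fun e => hne (Fin.ext e.symm)
        exact Fin.lt_def.mpr (by omega)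
  | inc hk a m m1 h0 =>
    refine ⟨0, by omega, fun j hj => by omega, ?_⟩
    intro j hj
    rcases eq_or_ne j ⟨0, hk⟩ with rfl | hne
    · simp [Function.update_self]
    · rw [Function.update_of_ne hne]
      refine hhi j ?_
      have hi : i = 0 := by
        by_contra hne'
        have := hlo ⟨0, hk⟩ (show 0 + 1 ≤ i by omega)
        rw [h0] at this
        exact Option.some_ne_none _ this
      omega
  | dec hk a m m1 h0 =>
    refine ⟨0, by omega, fun j hj => by omega, ?_⟩
    intro j hj
    rcases eq_or_ne j ⟨0, hk⟩ with rfl | hne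
    · simp [Function.update_self]
    · rw [Function.update_of_ne hne]
      refine hhi j ?_
      have hi : i = 0 := by
        by_contra hne'
        have := hlo ⟨0, hk⟩ (show 0 + 1 ≤ i by omega)
        rw [h0] at this
        exact Option.some_ne_none _ this
      omega
  | store j hj m v w hv hw hen =>
    have hij : i ≤ j.1 := by
      by_contra hc
      have := hlo j (by omega)
      rw [hv] at this
      exact Option.some_ne_none _ this
    refine ⟨j.1 + 1, hj.le, ?_, ?_⟩
    · intro j' hj'
      rcases eq_or_ne j' j with rfl | hne
      · simp [Function.update_self]
      · rw [Function.update_of_ne hne,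
          Function.update_of_ne (by intro e; subst e; simp at hj')]
        refine hen j' ?_
        have : j'.1 ≠ j.1 := fun e => hne (Fin.ext e)
        exact Fin.lt_def.mpr (by omega)
    · intro j' hj'
      have hne : j' ≠ j := by intro e; subst e; omega
      rw [Function.update_of_ne hne]
      rcases eq_or_ne j' ⟨j.1 + 1, hj⟩ with rfl | hne2
      · simp [Function.update_self]
      · rw [Function.update_of_ne hne2]
        refine hhi j' ?_
        have h1 : j'.1 ≠ j.1 := fun e => hne (Fin.ext e)
        have h2 : j'.1 ≠ j.1 + 1 := fun e => hne2 (Fin.ext e)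
        omega
  | load j hj m v w hm hen =>
    have hij : i ≤ j.1 + 1 := by
      by_contra hc
      have := hlo ⟨j.1 + 1, hj⟩ (show j.1 + 1 + 1 ≤ i by omega)
      rw [hm] at this
      exact Option.some_ne_none _ this
    refine ⟨j.1, j.2.le, ?_, ?_⟩
    · intro j' hj'
      rw [Function.update_of_ne (by intro e; subst e; omega),
        Function.update_of_ne (by intro e; subst e; simp at hj')]
      exact hen j' (le_of_lt (Fin.lt_def.mpr (by omega)))
    · intro j' hj'
      rcases eq_or_ne j' j with rfl | hne
      · simp [Function.update_self]
      · rw [Function.update_of_ne hne]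
        rcases eq_or_ne j' ⟨j.1 + 1, hj⟩ with rfl | hne2
        · simp [Function.update_self]
        · rw [Function.update_of_ne hne2]
          refine hhi j' ?_
          have h1 : j'.1 ≠ j.1 := fun e => hne (Fin.ext e)
          have h2 : j'.1 ≠ j.1 + 1 := fun e => hne2 (Fin.ext e)
          omega

lemma shape_reach {Q S A : Type} {k : ℕ} (M : HOMCAp Q S A k)
    (c : Q × Mvec A k)
    (h : Relation.ReflTransGen M.CStep (M.init, fun _ => none) c) :
    Shape' c.2 := by
  induction h with
  | refl => exact ⟨k, le_rfl, fun j _ => rfl, fun j hj => absurd j.2 (by omega)⟩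
  | tail _ hstep ih =>
    obtain ⟨a, op, _, hop⟩ := hstep
    exact shape_step hop ih

/-- In any reachable configuration `(q, m₁, …, m_k)` of a level-`k` HOMCA',
there is a unique index `0 ≤ i ≤ k` such that `m_j = ⊥` for all `j ≤ i` and `m_j ≠ ⊥`
for all `j > i`. -/
theorem homcap_reachable_shape (Q S A : Type) (k : ℕ) (M : HOMCAp Q S A k)
    (q : Q) (m : Mvec A k)
    (h : Relation.ReflTransGen M.CStep (M.init, fun _ => none) (q, m)) :
    ∃! i : ℕ, i ≤ k ∧ (∀ j : Fin k, j.1 + 1 ≤ i → m j = none) ∧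
      (∀ j : Fin k, i < j.1 + 1 → m j ≠ none) := by
  
  obtain ⟨i, hik, hlo, hhi⟩ := shape_reach M (q, m) h
  refine ⟨i, ⟨hik, hlo, hhi⟩, ?_⟩
  rintro i' ⟨hik', hlo', hhi'⟩
  by_contra hne
  rcases lt_or_gt_of_ne hne with hlt | hlt
  · have hj : i' < k := lt_of_lt_of_le hlt hik
    exact hhi' ⟨i', hj⟩ (show i' < i' + 1 by omega) (hlo ⟨i', hj⟩ (show i' + 1 ≤ i by omega))
  · have hj : i < k := lt_of_lt_of_le hlt hik'
    exact hhi ⟨i, hj⟩ (show i < i + 1 by omega) (hlo' ⟨i, hj⟩ (show i + 1 ≤ i' by omega))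
end
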